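/- For θ with c = cos θ ≠ 0 and s = sin θ ≠ 0, the function f(y) = |s| / (π(1+y)√(c² - y²)) on the interval (-|c|, |c|) is a probability density: ∫_{-|c|}^{|c|} |s| / (π(1+y)√(c² - y²)) dy = 1. -/

import Mathlib

open MeasureTheory

set_option maxHeartbeats 1000000 in
lemma konno_density_integral_aux (c s : ℝ) (hc0 : 0 < c) (hs0 : 0 < s)
    (hcs : c ^ 2 + s ^ 2 = 1) :
    ∫ y in Set.Ioo (-c) c, s / (Real.pi * (1 + y) * Real.sqrt (c ^ 2 - y ^ 2)) = 1 := by
  have hc1 : c < 1 := by nlinarith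
  set f : ℝ → ℝ := fun y => s / (Real.pi * (1 + y) * Real.sqrt (c ^ 2 - y ^ 2)) with hf
  set F : ℝ → ℝ := fun y => Real.arcsin ((c ^ 2 + y) / (c * (1 + y))) / Real.pi with hF
  -- derivative of the antiderivative
  have hderiv : ∀ y ∈ Set.Ioo (-c) c, HasDerivAt F (f y) y := by
    intro y hy
    obtain ⟨hy1, hy2⟩ := hy
    have h1y : 0 < 1 + y := by linarith
    have hQ : 0 < c ^ 2 - y ^ 2 := by nlinarith
    have hsq : 0 < Real.sqrt (c ^ 2 - y ^ 2) := Real.sqrt_pos.2 hQ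
    have hden : c * (1 + y) ≠ 0 := by positivity
    have hAux : Real.sqrt (c ^ 2 - y ^ 2) ^ 2 = c ^ 2 - y ^ 2 := Real.sq_sqrt hQ.le
    have hs2 : s ^ 2 = 1 - c ^ 2 := by linarith
    have key : 1 - ((c ^ 2 + y) / (c * (1 + y))) ^ 2
        = (s * Real.sqrt (c ^ 2 - y ^ 2) / (c * (1 + y))) ^ 2 := by
      field_simp
      nlinarith [hAux, hs2]
    have hsqrt1mu : Real.sqrt (1 - ((c ^ 2 + y) / (c * (1 + y))) ^ 2)
        = s * Real.sqrt (c ^ 2 - y ^ 2) / (c * (1 + y)) := by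
      rw [key, Real.sqrt_sq (by positivity)]
    have hu2 : ((c ^ 2 + y) / (c * (1 + y))) ^ 2 < 1 := by
      have h0 : 0 < (s * Real.sqrt (c ^ 2 - y ^ 2) / (c * (1 + y))) ^ 2 := by positivity
      linarith [key]
    have h₁ : (c ^ 2 + y) / (c * (1 + y)) ≠ -1 := by
      intro h; rw [h] at hu2; norm_num at hu2
    have h₂ : (c ^ 2 + y) / (c * (1 + y)) ≠ 1 := by
      intro h; rw [h] at hu2; norm_num at hu2
    have hnum : HasDerivAt (fun t : ℝ => c ^ 2 + t) 1 y := by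
      simpa using (hasDerivAt_id y).const_add (c ^ 2)
    have hden' : HasDerivAt (fun t : ℝ => c * (1 + t)) c y := by
      simpa using ((hasDerivAt_id y).const_add 1).const_mul c
    have hU : HasDerivAt (fun t : ℝ => (c ^ 2 + t) / (c * (1 + t)))
        ((1 * (c * (1 + y)) - (c ^ 2 + y) * c) / (c * (1 + y)) ^ 2) y :=
      hnum.div hden' hden
    have harc := (Real.hasDerivAt_arcsin h₁ h₂).comp y hU
    have hfinal := harc.div_const Real.pi
    refine hfinal.congr_deriv (Eq.symm ?_)
    rw [hsqrt1mu, hf]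
    have hpi := Real.pi_pos
    field_simp
    linear_combination hs2
  -- continuity of F on the closed interval
  have hcont : ContinuousOn F (Set.Icc (-c) c) := by
    apply ContinuousOn.div_const
    apply Real.continuous_arcsin.comp_continuousOn
    apply ContinuousOn.div (by fun_prop) (by fun_prop)
    intro y hy
    have h1y : 0 < 1 + y := by have := hy.1; linarith
    positivity
  -- integrability
  have hK : 0 < 1 - c := by linarith
  have hfm : AEStronglyMeasurable f (volume.restrict (Set.Ioc (-c) (0:ℝ))) := by
    apply Measurable.aestronglyMeasurable
    fun_prop
  have hfm2 : AEStronglyMeasurable f (volume.restrict (Set.Ioo (0:ℝ) c)) := by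
    apply Measurable.aestronglyMeasurable
    fun_prop
  have hfnonneg : ∀ y : ℝ, -c < y → ‖f y‖ = f y := by
    intro y hy
    have h1y : 0 < 1 + y := by linarith
    rw [Real.norm_eq_abs, abs_of_nonneg]
    apply div_nonneg hs0.le
    exact mul_nonneg (mul_nonneg Real.pi_pos.le h1y.le) (Real.sqrt_nonneg _)
  have hint1 : IntegrableOn f (Set.Ioc (-c) 0) := by
    have hb : IntervalIntegrable (fun y : ℝ => (y + c) ^ (-(1/2) : ℝ)) volume (-c) 0 := by
      have h0 : IntervalIntegrable (fun x : ℝ => x ^ (-(1/2) : ℝ)) volume 0 c :=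
        intervalIntegral.intervalIntegrable_rpow' (by norm_num)
      simpa using h0.comp_add_right c
    have hb' : IntegrableOn (fun y : ℝ => (y + c) ^ (-(1/2) : ℝ)) (Set.Ioc (-c) 0) := by
      rwa [intervalIntegrable_iff_integrableOn_Ioc_of_le (by linarith)] at hb
    apply Integrable.mono' (hb'.const_mul (s / (Real.pi * (1 - c) * Real.sqrt c))) hfm
    rw [ae_restrict_iff' measurableSet_Ioc]
    refine Filter.Eventually.of_forall fun y hy => ?_
    obtain ⟨hy1, hy2⟩ := hy
    have h1y : 0 < 1 + y := by linarith
    have hyc : 0 < y + c := by linarith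
    have hQ : 0 < c ^ 2 - y ^ 2 := by nlinarith
    rw [hfnonneg y hy1]
    have hrw : (y + c) ^ (-(1/2) : ℝ) = 1 / Real.sqrt (y + c) := by
      rw [Real.rpow_neg hyc.le, Real.sqrt_eq_rpow]
      norm_num
    rw [hrw]
    have hsyc : 0 < Real.sqrt (y + c) := Real.sqrt_pos.2 hyc
    have e1 : s / (Real.pi * (1 - c) * Real.sqrt c) * (1 / Real.sqrt (y + c))
        = s / (Real.pi * (1 - c) * (Real.sqrt c * Real.sqrt (y + c))) := by
      rw [div_mul_div_comm, mul_one, mul_assoc]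
    rw [e1]
    have h2 : Real.sqrt c * Real.sqrt (y + c) = Real.sqrt (c * (y + c)) :=
      (Real.sqrt_mul hc0.le _).symm
    have h3 : Real.sqrt (c * (y + c)) ≤ Real.sqrt (c ^ 2 - y ^ 2) :=
      Real.sqrt_le_sqrt (by nlinarith)
    have hd : Real.pi * (1 - c) * (Real.sqrt c * Real.sqrt (y + c))
        ≤ Real.pi * (1 + y) * Real.sqrt (c ^ 2 - y ^ 2) := by
      rw [h2]
      apply mul_le_mul (by nlinarith [Real.pi_pos]) h3 (Real.sqrt_nonneg _)
      positivity
    have hdpos : 0 < Real.pi * (1 - c) * (Real.sqrt c * Real.sqrt (y + c)) := by positivity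
    exact div_le_div_of_nonneg_left hs0.le hdpos hd
  have hint2 : IntegrableOn f (Set.Ioc 0 c) := by
    rw [integrableOn_Ioc_iff_integrableOn_Ioo]
    have hb : IntervalIntegrable (fun y : ℝ => (c - y) ^ (-(1/2) : ℝ)) volume 0 c := by
      have h0 : IntervalIntegrable (fun x : ℝ => x ^ (-(1/2) : ℝ)) volume 0 c :=
        intervalIntegral.intervalIntegrable_rpow' (by norm_num)
      simpa using (h0.comp_sub_left c).symm
    have hb' : IntegrableOn (fun y : ℝ => (c - y) ^ (-(1/2) : ℝ)) (Set.Ioo 0 c) := by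
      rw [intervalIntegrable_iff_integrableOn_Ioc_of_le hc0.le] at hb
      exact hb.mono_set Set.Ioo_subset_Ioc_self
    apply Integrable.mono' (hb'.const_mul (s / (Real.pi * (1 - c) * Real.sqrt c))) hfm2
    rw [ae_restrict_iff' measurableSet_Ioo]
    refine Filter.Eventually.of_forall fun y hy => ?_
    obtain ⟨hy1, hy2⟩ := hy
    have h1y : 0 < 1 + y := by linarith
    have hyc : 0 < c - y := by linarith
    have hQ : 0 < c ^ 2 - y ^ 2 := by nlinarith
    rw [hfnonneg y (by linarith)]
    have hrw : (c - y) ^ (-(1/2) : ℝ) = 1 / Real.sqrt (c - y) := by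
      rw [Real.rpow_neg hyc.le, Real.sqrt_eq_rpow]
      norm_num
    rw [hrw]
    have hsyc : 0 < Real.sqrt (c - y) := Real.sqrt_pos.2 hyc
    have e1 : s / (Real.pi * (1 - c) * Real.sqrt c) * (1 / Real.sqrt (c - y))
        = s / (Real.pi * (1 - c) * (Real.sqrt c * Real.sqrt (c - y))) := by
      rw [div_mul_div_comm, mul_one, mul_assoc]
    rw [e1]
    have h2 : Real.sqrt c * Real.sqrt (c - y) = Real.sqrt (c * (c - y)) :=
      (Real.sqrt_mul hc0.le _).symm
    have h3 : Real.sqrt (c * (c - y)) ≤ Real.sqrt (c ^ 2 - y ^ 2) :=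
      Real.sqrt_le_sqrt (by nlinarith)
    have hd : Real.pi * (1 - c) * (Real.sqrt c * Real.sqrt (c - y))
        ≤ Real.pi * (1 + y) * Real.sqrt (c ^ 2 - y ^ 2) := by
      rw [h2]
      apply mul_le_mul (by nlinarith [Real.pi_pos]) h3 (Real.sqrt_nonneg _)
      positivity
    have hdpos : 0 < Real.pi * (1 - c) * (Real.sqrt c * Real.sqrt (c - y)) := by positivity
    exact div_le_div_of_nonneg_left hs0.le hdpos hd
  have hint : IntervalIntegrable f volume (-c) c := by
    rw [intervalIntegrable_iff_integrableOn_Ioc_of_le (by linarith)]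
    rw [show Set.Ioc (-c) c = Set.Ioc (-c) 0 ∪ Set.Ioc 0 c from
      (Set.Ioc_union_Ioc_eq_Ioc (by linarith) hc0.le).symm]
    exact hint1.union hint2
  have hle : (-c) ≤ c := by linarith
  have hFTC := intervalIntegral.integral_eq_sub_of_hasDeriv_right_of_le hle hcont
    (fun x hx => (hderiv x hx).hasDerivWithinAt) hint
  rw [intervalIntegral.integral_of_le hle, MeasureTheory.integral_Ioc_eq_integral_Ioo] at hFTC
  rw [hFTC, hF]
  have hpi := Real.pi_pos
  have h1 : (c ^ 2 + c) / (c * (1 + c)) = 1 := by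
    rw [show c ^ 2 + c = c * (1 + c) by ring, div_self (by positivity)]
  have h2 : (c ^ 2 + -c) / (c * (1 + -c)) = -1 := by
    rw [show c ^ 2 + -c = (-1) * (c * (1 + -c)) by ring]
    rw [mul_div_assoc, div_self (by positivity), mul_one]
  simp only [h1, h2, Real.arcsin_one, Real.arcsin_neg_one]
  field_simp
  ring

theorem konno_density_integral (θ : ℝ) (hc : Real.cos θ ≠ 0) (hs : Real.sin θ ≠ 0) :
    ∫ y in Set.Ioo (-|Real.cos θ|) |Real.cos θ|,
      |Real.sin θ| / (Real.pi * (1 + y) * Real.sqrt (Real.cos θ ^ 2 - y ^ 2)) = 1 := by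
  have hcos2 : Real.cos θ ^ 2 = |Real.cos θ| ^ 2 := (sq_abs _).symm
  simp only [hcos2]
  exact konno_density_integral_aux _ _ (abs_pos.2 hc) (abs_pos.2 hs)
    (by rw [sq_abs, sq_abs]; exact Real.cos_sq_add_sin_sq θ)
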